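/- Let K[u] = ∂/∂x₁((c₂u² + c₀)∂u/∂x₁) + β₀ ∂²u/∂x₂² + (3a₀c₂u² + d₁u + d₀)∂u/∂x₁ + a₀d₁u² + k₁u. Then for all real ν₁, ν₂, the function u = e^{−a₀x₁}(ν₁ sin(√b₀ x₂) + ν₂ cos(√b₀ x₂)) with b₀ > 0 satisfies K[u] = (a₀²c₀ − b₀β₀ − a₀d₀ + k₁) u. In particular span{e^{−a₀x₁} sin(√b₀ x₂), e^{−a₀x₁} cos(√b₀ x₂)} is invariant under K, and every element of this span is an eigenfunction of K with eigenvalue a₀²c₀ − b₀β₀ − a₀d₀ + k₁. -/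

import Mathlib

open Real

private lemma hasDerivAt_E (a₀ x : ℝ) :
    HasDerivAt (fun x' => Real.exp (-a₀ * x')) (Real.exp (-a₀ * x) * (-a₀)) x := by
  simpa using ((hasDerivAt_id x).const_mul (-a₀)).exp

/-- every element of the trigonometric-exponential subspace
`span{e^{−a₀x₁}sin(√b₀ x₂), e^{−a₀x₁}cos(√b₀ x₂)}` (b₀ > 0) is an
eigenfunction of the cubic operator K with eigenvalue
`a₀²c₀ − b₀β₀ − a₀d₀ + k₁`. -/
theorem stmt2 (a₀ b₀ c₀ c₂ b0 d₀ d₁ k₁ : ℝ) (hb₀ : 0 < b₀)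
    (K : (ℝ → ℝ → ℝ) → ℝ → ℝ → ℝ)
    (hK : ∀ u : ℝ → ℝ → ℝ, ∀ x y : ℝ,
      K u x y =
        deriv (fun x' => (c₂ * (u x' y) ^ 2 + c₀) *
          deriv (fun x'' => u x'' y) x') x +
        b0 * deriv (fun y' => deriv (fun y'' => u x y'') y') y +
        (3 * a₀ * c₂ * (u x y) ^ 2 + d₁ * u x y + d₀) *
          deriv (fun x' => u x' y) x +
        a₀ * d₁ * (u x y) ^ 2 + k₁ * u x y) :
    ∀ ν₁ ν₂ : ℝ, ∀ x y : ℝ,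
      K (fun x₁ x₂ => exp (-a₀ * x₁) *
          (ν₁ * sin (Real.sqrt b₀ * x₂) + ν₂ * cos (Real.sqrt b₀ * x₂))) x y =
        (a₀ ^ 2 * c₀ - b₀ * b0 - a₀ * d₀ + k₁) *
          (exp (-a₀ * x) *
            (ν₁ * sin (Real.sqrt b₀ * y) + ν₂ * cos (Real.sqrt b₀ * y))) := by
  intro ν₁ ν₂ x y
  set s := Real.sqrt b₀ with hs_def
  have hs : s ^ 2 = b₀ := Real.sq_sqrt hb₀.le
  set T : ℝ → ℝ := fun y' => ν₁ * sin (s * y') + ν₂ * cos (s * y') with hT_def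
  -- derivative in x of u(·, y')
  have hux : ∀ (x' y' : ℝ),
      HasDerivAt (fun x'' => Real.exp (-a₀ * x'') * T y')
        (Real.exp (-a₀ * x') * (-a₀) * T y') x' :=
    fun x' y' => (hasDerivAt_E a₀ x').mul_const (T y')
  have hdux : ∀ y', (fun x' => deriv (fun x'' => Real.exp (-a₀ * x'') * T y') x')
      = fun x' => Real.exp (-a₀ * x') * (-a₀) * T y' :=
    fun y' => funext fun x' => (hux x' y').deriv
  -- derivative of T
  have hT : ∀ y', HasDerivAt T
      (ν₁ * (Real.cos (s * y') * s) + ν₂ * (-Real.sin (s * y') * s)) y' := by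
    intro y'
    have h1 : HasDerivAt (fun y'' => s * y'') s y' := by
      simpa using (hasDerivAt_id y').const_mul s
    exact ((h1.sin.const_mul ν₁).add (h1.cos.const_mul ν₂))
  -- first y-derivative of u(x, ·)
  have huy : ∀ y', HasDerivAt (fun y'' => Real.exp (-a₀ * x) * T y'')
      (Real.exp (-a₀ * x) * (ν₁ * (Real.cos (s * y') * s) + ν₂ * (-Real.sin (s * y') * s))) y' :=
    fun y' => (hT y').const_mul (Real.exp (-a₀ * x))
  have hduy : (fun y' => deriv (fun y'' => Real.exp (-a₀ * x) * T y'') y')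
      = fun y' => Real.exp (-a₀ * x) *
        (ν₁ * (Real.cos (s * y') * s) + ν₂ * (-Real.sin (s * y') * s)) :=
    funext fun y' => (huy y').deriv
  -- second y-derivative
  have huyy : HasDerivAt (fun y' => Real.exp (-a₀ * x) *
      (ν₁ * (Real.cos (s * y') * s) + ν₂ * (-Real.sin (s * y') * s)))
      (Real.exp (-a₀ * x) *
        (ν₁ * (-Real.sin (s * y) * s * s) + ν₂ * (-(Real.cos (s * y) * s) * s))) y := by
    have h1 : HasDerivAt (fun y'' => s * y'') s y := by
      simpa using (hasDerivAt_id y).const_mul s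
    have h2 := (((h1.cos.mul_const s).const_mul ν₁).add
      (((h1.sin.neg).mul_const s).const_mul ν₂)).const_mul (Real.exp (-a₀ * x))
    exact h2
    try ring
  -- x-derivative of the flux term
  have hflux : HasDerivAt (fun x' =>
      (c₂ * (Real.exp (-a₀ * x') * T y) ^ 2 + c₀) * (Real.exp (-a₀ * x') * (-a₀) * T y))
      ((c₂ * (2 * (Real.exp (-a₀ * x) * T y) * (Real.exp (-a₀ * x) * (-a₀) * T y)))
          * (Real.exp (-a₀ * x) * (-a₀) * T y)
        + (c₂ * (Real.exp (-a₀ * x) * T y) ^ 2 + c₀)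
          * (Real.exp (-a₀ * x) * (-a₀) * (-a₀) * T y)) x := by
    have hv := hux x y
    have h1 : HasDerivAt (fun x' => c₂ * (Real.exp (-a₀ * x') * T y) ^ 2 + c₀)
        (c₂ * (2 * (Real.exp (-a₀ * x) * T y) * (Real.exp (-a₀ * x) * (-a₀) * T y))) x := by
      have := ((hv.pow 2).const_mul c₂).add_const c₀
      refine this.congr_deriv ?_
      norm_num
    have h2 : HasDerivAt (fun x' => Real.exp (-a₀ * x') * (-a₀) * T y)
        (Real.exp (-a₀ * x) * (-a₀) * (-a₀) * T y) x := by
      have := ((hasDerivAt_E a₀ x).mul_const (-a₀)).mul_const (T y)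
      convert this using 1
      try ring
    exact h1.mul h2
  rw [hK]
  have hT0 : ∀ y', ν₁ * sin (s * y') + ν₂ * cos (s * y') = T y' := fun _ => rfl
  simp only [hT0]
  have h1 : ∀ x' : ℝ, deriv (fun x'' => Real.exp (-a₀ * x'') * T y) x'
      = Real.exp (-a₀ * x') * (-a₀) * T y := fun x' => (hux x' y).deriv
  have h2 : ∀ y' : ℝ, deriv (fun y'' => Real.exp (-a₀ * x) * T y'') y'
      = Real.exp (-a₀ * x) *
        (ν₁ * (Real.cos (s * y') * s) + ν₂ * (-Real.sin (s * y') * s)) :=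
    fun y' => (huy y').deriv
  simp only [h1, h2]
  rw [hflux.deriv, huyy.deriv]
  simp only [hT_def]
  linear_combination
    (-b0 * Real.exp (-a₀ * x) * (ν₁ * Real.sin (s * y) + ν₂ * Real.cos (s * y))) * hs
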